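/- arXiv:1210.1243 — 3 statements merged into one kernel-verified Lean document; each statement's English description precedes it below -/
import Mathlib

section
/- Let H be holomorphic on the strip {−ε < Re(s) < 1+ε} with H(0)=0, H(1)=1 and polynomial growth, and suppose s ↦ H(s)E*_s(z) is holomorphic there except for a simple pole at s=1 of residue 1 and decays rapidly in vertical strips. Then for 0 < δ < ε, 1 = ∫_{Re(s)=1+δ} ( H(s) − H(1−s) ) E*_s(z) ds/(2πi), using the functional equation E*_s = E*_{1−s}. -/
open Complex Real MeasureTheory Set intervalIntegral Filter Topology

lemma odd_part (a T : ℝ) : ∫ t in (-T)..T, t / (a^2 + t^2) = 0 := by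
  have h := intervalIntegral.integral_comp_neg (a := -T) (b := T) (fun u => u / (a^2 + u^2))
  simp only [neg_neg] at h
  have h2 : ∀ t : ℝ, (-t) / (a^2 + (-t)^2) = -(t / (a^2 + t^2)) := by intro t; ring_nf
  rw [intervalIntegral.integral_congr (g := fun t => -(t / (a^2+t^2))) (fun t _ => h2 t),
    intervalIntegral.integral_neg] at h
  linarith

lemma even_part (a T : ℝ) (ha : 0 < a) :
    ∫ t in (-T)..T, a / (a^2 + t^2) = 2 * Real.arctan (T / a) := by
  have key : ∀ t : ℝ, a / (a^2 + t^2) = a⁻¹ * (fun u => (1 + u^2)⁻¹) (t / a) := by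
    intro t
    have : a^2 + t^2 > 0 := by positivity
    field_simp
  rw [intervalIntegral.integral_congr (fun t _ => key t), intervalIntegral.integral_const_mul,
    intervalIntegral.integral_comp_div (a := -T) (b := T) (c := a) (fun u => (1 + u^2)⁻¹) ha.ne']
  simp only [smul_eq_mul, integral_inv_one_add_sq, neg_div, Real.arctan_neg]
  field_simp
  ring

lemma pole_line_integral (a T : ℝ) (ha : 0 < a) :
    ∫ t in (-T)..T, ((a : ℂ) + t * Complex.I)⁻¹ = ((2 * Real.arctan (T / a) : ℝ) : ℂ) := by
  have key : ∀ t : ℝ, ((a:ℂ) + t * Complex.I)⁻¹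
      = ((a / (a^2 + t^2) : ℝ) : ℂ) - ((t / (a^2 + t^2) : ℝ) : ℂ) * Complex.I := by
    intro t
    have hd : (a^2 + t^2 : ℝ) ≠ 0 := by positivity
    have hne : (a:ℂ) + t * Complex.I ≠ 0 := by
      intro h
      have := congrArg Complex.re h
      simp at this
      exact ha.ne' this
    have hdc : ((a:ℂ)^2 + (t:ℂ)^2) ≠ 0 := by
      have : ((a^2 + t^2 : ℝ) : ℂ) ≠ 0 := Complex.ofReal_ne_zero.2 hd
      push_cast at this
      exact this
    refine (eq_inv_of_mul_eq_one_left ?_).symm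
    push_cast
    field_simp
    ring_nf
    simp [Complex.I_sq]
  rw [intervalIntegral.integral_congr (fun t _ => key t)]
  have i1 : IntervalIntegrable (fun t : ℝ => ((a / (a^2 + t^2) : ℝ) : ℂ)) volume (-T) T := by
    apply Continuous.intervalIntegrable
    have : Continuous fun t : ℝ => a / (a^2 + t^2) := by
      apply continuous_const.div (by continuity) (fun t => by positivity)
    exact Complex.continuous_ofReal.comp this
  have i2 : IntervalIntegrable (fun t : ℝ => ((t / (a^2 + t^2) : ℝ) : ℂ) * Complex.I) volume (-T) T := by
    apply Continuous.intervalIntegrable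
    have : Continuous fun t : ℝ => t / (a^2 + t^2) := by
      apply continuous_id.div (by continuity) (fun t => by positivity)
    exact (Complex.continuous_ofReal.comp this).mul continuous_const
  rw [intervalIntegral.integral_sub i1 i2, intervalIntegral.integral_mul_const,
    intervalIntegral.integral_ofReal, intervalIntegral.integral_ofReal,
    even_part a T ha, odd_part a T]
  simp

/-- Let `Estar` be (the value at a fixed point `z` of) the completed Eisenstein series
`s ↦ E*_s(z)`, satisfying the functional equation `E*_s = E*_{1-s}`.  Let `H` be
holomorphic on the strip `{-ε < Re s < 1 + ε}` with `H(0) = 0`, `H(1) = 1` and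
polynomial growth, and suppose `s ↦ H(s)E*_s` is holomorphic on the strip except
for a simple pole at `s = 1` of residue `1`, and decays rapidly in vertical strips.
Then for `0 < δ < ε` we have `1 = ∫_{Re s = 1+δ} (H(s) - H(1-s)) E*_s ds/(2πi)`. -/
theorem residue_contour_identity (ε δ : ℝ) (hε : 0 < ε) (hδ : 0 < δ) (hδε : δ < ε)
    (H Estar : ℂ → ℂ)
    (hH : DifferentiableOn ℂ H {s : ℂ | -ε < s.re ∧ s.re < 1 + ε})
    (hH0 : H 0 = 0) (hH1 : H 1 = 1)
    (hHgrow : ∃ C : ℝ, ∃ n : ℕ, ∀ s : ℂ, -ε < s.re → s.re < 1 + ε →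
      ‖H s‖ ≤ C * (1 + ‖s‖) ^ n)
    (hfe : ∀ s : ℂ, Estar s = Estar (1 - s))
    (hpole : ∃ g : ℂ → ℂ, DifferentiableOn ℂ g {s : ℂ | -ε < s.re ∧ s.re < 1 + ε} ∧
      ∀ s : ℂ, -ε < s.re → s.re < 1 + ε → s ≠ 1 → H s * Estar s = g s + 1 / (s - 1))
    (hdecay : ∀ A : ℝ, ∃ C : ℝ, ∀ s : ℂ, -ε < s.re → s.re < 1 + ε → 1 ≤ |s.im| →
      ‖H s * Estar s‖ ≤ C * (1 + |s.im|) ^ (-A)) :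
    1 = ((1 / (2 * Real.pi) : ℝ) : ℂ) *
      ∫ t : ℝ, (H (1 + δ + t * Complex.I) - H (1 - (1 + δ + t * Complex.I))) *
        Estar (1 + δ + t * Complex.I) := by
  obtain ⟨g, hg, hgeq⟩ := hpole
  obtain ⟨C2, hC2⟩ := hdecay 2
  obtain ⟨C1, hC1⟩ := hdecay 1
  set F : ℝ → ℂ := fun t => (H (1 + δ + t * Complex.I) - H (1 - (1 + δ + t * Complex.I))) *
      Estar (1 + δ + t * Complex.I) with hFdef
  -- basic facts about points on the two vertical lines
  have hre1 : ∀ t : ℝ, (1 + (δ:ℂ) + t * Complex.I).re = 1 + δ := by intro t; simp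
  have him1 : ∀ t : ℝ, (1 + (δ:ℂ) + t * Complex.I).im = t := by intro t; simp
  have hmem1 : ∀ t : ℝ, -ε < (1 + (δ:ℂ) + t * Complex.I).re ∧
      (1 + (δ:ℂ) + t * Complex.I).re < 1 + ε := by
    intro t; rw [hre1]; constructor <;> linarith
  have hne1 : ∀ t : ℝ, (1 + (δ:ℂ) + t * Complex.I) ≠ 1 := by
    intro t h
    have := congrArg Complex.re h
    rw [hre1] at this
    simp at this
    linarith
  have hmem2 : ∀ t : ℝ, -ε < (1 - (1 + (δ:ℂ) + t * Complex.I)).re ∧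
      (1 - (1 + (δ:ℂ) + t * Complex.I)).re < 1 + ε := by
    intro t
    rw [Complex.sub_re, hre1, Complex.one_re]
    constructor <;> linarith
  have hne2 : ∀ t : ℝ, (1 - (1 + (δ:ℂ) + t * Complex.I)) ≠ 1 := by
    intro t h
    have := congrArg Complex.re h
    rw [Complex.sub_re, hre1, Complex.one_re] at this
    simp at this
    linarith
  -- pointwise identity for the integrand
  have hF : ∀ t : ℝ, F t = (g (1 + δ + t * Complex.I) - g (1 - (1 + δ + t * Complex.I)))
      + (((δ:ℂ) + t * Complex.I)⁻¹ + (1 + (δ:ℂ) + t * Complex.I)⁻¹) := by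
    intro t
    have e1 := hgeq _ (hmem1 t).1 (hmem1 t).2 (hne1 t)
    have e2 := hgeq _ (hmem2 t).1 (hmem2 t).2 (hne2 t)
    have hs0 : (1 + (δ:ℂ) + t * Complex.I) ≠ 0 := by
      intro h
      have := congrArg Complex.re h
      rw [hre1] at this
      simp at this
      linarith
    have hs1 : (1 + (δ:ℂ) + t * Complex.I) - 1 ≠ 0 := by
      intro h
      have := congrArg Complex.re h
      rw [Complex.sub_re, hre1, Complex.one_re] at this
      simp at this
      linarith
    calc F t = H (1 + δ + t * Complex.I) * Estar (1 + δ + t * Complex.I)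
          - H (1 - (1 + δ + t * Complex.I)) * Estar (1 - (1 + δ + t * Complex.I)) := by
          rw [hFdef]
          simp only
          rw [← hfe (1 + δ + t * Complex.I)]
          ring
      _ = (g (1 + δ + t * Complex.I) + 1 / ((1 + δ + t * Complex.I) - 1))
          - (g (1 - (1 + δ + t * Complex.I)) + 1 / ((1 - (1 + δ + t * Complex.I)) - 1)) := by
          rw [e1, e2]
      _ = (g (1 + δ + t * Complex.I) - g (1 - (1 + δ + t * Complex.I)))
          + ((((1 + δ + t * Complex.I) - 1))⁻¹ + (1 + (δ:ℂ) + t * Complex.I)⁻¹) := by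
          rw [show ((1 - (1 + (δ:ℂ) + t * Complex.I)) - 1) = -(1 + (δ:ℂ) + t * Complex.I) by ring,
            one_div, one_div, inv_neg]
          ring
      _ = _ := by
          rw [show ((1 + (δ:ℂ) + t * Complex.I) - 1) = (δ:ℂ) + t * Complex.I by ring]
  -- continuity facts
  have hgc : ContinuousOn g {s : ℂ | -ε < s.re ∧ s.re < 1 + ε} := hg.continuousOn
  have hline1 : Continuous fun t : ℝ => (1 + (δ:ℂ) + t * Complex.I) :=
    continuous_const.add (Complex.continuous_ofReal.mul continuous_const)
  have hline2 : Continuous fun t : ℝ => (1 - (1 + (δ:ℂ) + t * Complex.I)) :=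
    continuous_const.sub hline1
  have contg1 : Continuous fun t : ℝ => g (1 + δ + t * Complex.I) :=
    hgc.comp_continuous hline1 (fun t => hmem1 t)
  have contg2 : Continuous fun t : ℝ => g (1 - (1 + δ + t * Complex.I)) :=
    hgc.comp_continuous hline2 (fun t => hmem2 t)
  have hden1 : ∀ t : ℝ, ((δ:ℂ) + t * Complex.I) ≠ 0 := by
    intro t h
    have := congrArg Complex.re h
    simp at this
    exact hδ.ne' this
  have hden2 : ∀ t : ℝ, (1 + (δ:ℂ) + t * Complex.I) ≠ 0 := by
    intro t h
    have := congrArg Complex.re h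
    rw [hre1] at this
    simp at this
    linarith
  have contp1 : Continuous fun t : ℝ => ((δ:ℂ) + t * Complex.I)⁻¹ :=
    Continuous.inv₀ (continuous_const.add (Complex.continuous_ofReal.mul continuous_const)) hden1
  have contp2 : Continuous fun t : ℝ => (1 + (δ:ℂ) + t * Complex.I)⁻¹ :=
    Continuous.inv₀ hline1 hden2
  have contF : Continuous F :=
    (((contg1.sub contg2).add (contp1.add contp2))).congr (fun t => (hF t).symm)
  -- integrability of F over ℝ
  have hFbig : ∀ t : ℝ, 1 ≤ |t| → ‖F t‖ ≤ 2 * max C2 0 * (1 + t^2)⁻¹ := by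
    intro t ht
    have hsim : |(1 + (δ:ℂ) + t * Complex.I).im| = |t| := by rw [him1]
    have hsim2 : |(1 - (1 + (δ:ℂ) + t * Complex.I)).im| = |t| := by
      rw [Complex.sub_im, him1, Complex.one_im]
      simp
    have b1 := hC2 _ (hmem1 t).1 (hmem1 t).2 (by rw [hsim]; exact ht)
    have b2 := hC2 _ (hmem2 t).1 (hmem2 t).2 (by rw [hsim2]; exact ht)
    rw [hsim] at b1
    rw [hsim2] at b2
    have hFt : F t = H (1 + δ + t * Complex.I) * Estar (1 + δ + t * Complex.I)
        - H (1 - (1 + δ + t * Complex.I)) * Estar (1 - (1 + δ + t * Complex.I)) := by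
      rw [hFdef]
      simp only
      rw [← hfe (1 + δ + t * Complex.I)]
      ring
    have hnorm : ‖F t‖ ≤ ‖H (1 + δ + t * Complex.I) * Estar (1 + δ + t * Complex.I)‖
        + ‖H (1 - (1 + δ + t * Complex.I)) * Estar (1 - (1 + δ + t * Complex.I))‖ := by
      rw [hFt]; exact norm_sub_le _ _
    have hrpow : (1 + |t|) ^ (-(2:ℝ)) ≤ (1 + t^2)⁻¹ := by
      rw [Real.rpow_neg (by positivity), show ((2:ℝ)) = ((2:ℕ):ℝ) by norm_num,
        Real.rpow_natCast]
      have h1 : (0:ℝ) < 1 + t^2 := by positivity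
      have h2 : 1 + t^2 ≤ (1 + |t|)^2 := by nlinarith [abs_nonneg t, _root_.sq_abs t]
      gcongr
    have hCmax : C2 ≤ max C2 0 := le_max_left _ _
    have hrnonneg : (0:ℝ) ≤ (1 + |t|) ^ (-(2:ℝ)) := Real.rpow_nonneg (by positivity) _
    have hb : C2 * (1 + |t|) ^ (-(2:ℝ)) ≤ max C2 0 * (1 + t^2)⁻¹ := by
      calc C2 * (1 + |t|) ^ (-(2:ℝ)) ≤ max C2 0 * (1 + |t|) ^ (-(2:ℝ)) := by
            exact mul_le_mul_of_nonneg_right hCmax hrnonneg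
        _ ≤ max C2 0 * (1 + t^2)⁻¹ := by
            exact mul_le_mul_of_nonneg_left hrpow (le_max_right _ _)
    calc ‖F t‖ ≤ _ + _ := hnorm
      _ ≤ max C2 0 * (1 + t^2)⁻¹ + max C2 0 * (1 + t^2)⁻¹ := add_le_add (b1.trans hb) (b2.trans hb)
      _ = 2 * max C2 0 * (1 + t^2)⁻¹ := by ring
  obtain ⟨M, hM⟩ := (isCompact_Icc (a := (-1:ℝ)) (b := 1)).exists_bound_of_continuousOn
    contF.continuousOn
  have hFbound : ∀ t : ℝ, ‖F t‖ ≤ max (2 * max C2 0) (2 * max M 0) * (1 + t^2)⁻¹ := by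
    intro t
    rcases le_or_gt 1 |t| with ht | ht
    · calc ‖F t‖ ≤ 2 * max C2 0 * (1 + t^2)⁻¹ := hFbig t ht
        _ ≤ max (2 * max C2 0) (2 * max M 0) * (1 + t^2)⁻¹ := by
            apply mul_le_mul_of_nonneg_right (le_max_left _ _) (by positivity)
    · have htt : t ∈ Icc (-1:ℝ) 1 := by
        constructor <;> [linarith [neg_abs_le t]; linarith [le_abs_self t]]
      have h1 : ‖F t‖ ≤ M := hM t htt
      have h2 : (1 + t^2)⁻¹ ≥ (2:ℝ)⁻¹ := by
        have : t^2 ≤ 1 := by nlinarith [_root_.sq_abs t, abs_nonneg t]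
        have h3 : (0:ℝ) < 1 + t^2 := by positivity
        rw [ge_iff_le, inv_le_inv₀ (by norm_num) h3]
        linarith
      calc ‖F t‖ ≤ M := h1
        _ ≤ max M 0 := le_max_left _ _
        _ = 2 * max M 0 * (2:ℝ)⁻¹ := by ring
        _ ≤ 2 * max M 0 * (1 + t^2)⁻¹ := by
            apply mul_le_mul_of_nonneg_left h2 (by positivity)
        _ ≤ max (2 * max C2 0) (2 * max M 0) * (1 + t^2)⁻¹ := by
            apply mul_le_mul_of_nonneg_right (le_max_right _ _) (by positivity)
  have hFint : Integrable F := by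
    have hi : Integrable (fun t : ℝ => max (2 * max C2 0) (2 * max M 0) * (1 + t^2)⁻¹) :=
      integrable_inv_one_add_sq.const_mul _
    exact hi.mono' contF.aestronglyMeasurable (ae_of_all _ hFbound)
  have hlim1 : Tendsto (fun T : ℝ => ∫ t in (-T)..T, F t) atTop (𝓝 (∫ t, F t)) :=
    intervalIntegral_tendsto_integral hFint tendsto_neg_atTop_atBot tendsto_id
  -- splitting the truncated integrals
  have hsplit : ∀ T : ℝ, ∫ t in (-T)..T, F t =
      ((∫ t in (-T)..T, g (1 + δ + t * Complex.I))
        - ∫ t in (-T)..T, g (1 - (1 + δ + t * Complex.I)))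
      + ((∫ t in (-T)..T, ((δ:ℂ) + t * Complex.I)⁻¹)
        + ∫ t in (-T)..T, (1 + (δ:ℂ) + t * Complex.I)⁻¹) := by
    intro T
    rw [intervalIntegral.integral_congr (fun t _ => hF t),
      intervalIntegral.integral_add (f := fun t : ℝ => g (1 + δ + t * Complex.I) - g (1 - (1 + δ + t * Complex.I)))
        (g := fun t : ℝ => ((δ:ℂ) + t * Complex.I)⁻¹ + (1 + (δ:ℂ) + t * Complex.I)⁻¹)
        ((contg1.sub contg2).intervalIntegrable _ _)
        ((contp1.add contp2).intervalIntegrable _ _),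
      intervalIntegral.integral_sub (contg1.intervalIntegrable _ _)
        (contg2.intervalIntegrable _ _),
      intervalIntegral.integral_add (contp1.intervalIntegrable _ _)
        (contp2.intervalIntegrable _ _)]
  have hflip : ∀ T : ℝ, (∫ t in (-T)..T, g (1 - (1 + δ + t * Complex.I)))
      = ∫ t in (-T)..T, g (-(δ:ℂ) + t * Complex.I) := by
    intro T
    have h := intervalIntegral.integral_comp_neg (a := -T) (b := T)
      (fun u : ℝ => g (-(δ:ℂ) + u * Complex.I))
    simp only [neg_neg] at h
    rw [← h]
    apply intervalIntegral.integral_congr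
    intro t _
    congr 1
    push_cast
    ring
  -- bound for g near the edges of the strip
  have hgb : ∀ s : ℂ, -δ ≤ s.re → s.re ≤ 1 + δ → 1 ≤ |s.im| →
      ‖g s‖ ≤ max C1 0 * (1 + |s.im|)⁻¹ + |s.im|⁻¹ := by
    intro s hs1 hs2 him
    have hs3 : s ≠ 1 := by
      intro h
      rw [h] at him
      norm_num [Complex.one_im] at him
    have heq := hgeq s (by linarith) (by linarith) hs3
    have hgs : g s = H s * Estar s - 1 / (s - 1) := by linear_combination -heq
    have h1 : ‖g s‖ ≤ ‖H s * Estar s‖ + ‖1 / (s - 1)‖ := by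
      rw [hgs]; exact norm_sub_le _ _
    have h2 := hC1 s (by linarith) (by linarith) him
    have h3 : ‖(1:ℂ) / (s - 1)‖ ≤ |s.im|⁻¹ := by
      have h4 : |s.im| ≤ ‖s - 1‖ := by
        have h5 := Complex.abs_im_le_norm (s - 1)
        rw [Complex.sub_im, Complex.one_im, sub_zero] at h5
        exact h5
      rw [one_div, norm_inv]
      have h6 : (0:ℝ) < |s.im| := by linarith
      exact inv_anti₀ h6 h4
    have h5 : C1 * (1 + |s.im|) ^ (-(1:ℝ)) ≤ max C1 0 * (1 + |s.im|)⁻¹ := by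
      rw [Real.rpow_neg_one]
      exact mul_le_mul_of_nonneg_right (le_max_left _ _) (by positivity)
    linarith
  -- the rectangle contour estimate
  have hGnorm : ∀ T : ℝ, 1 ≤ T →
      ‖(∫ t in (-T)..T, g (1 + δ + t * Complex.I))
        - ∫ t in (-T)..T, g (-(δ:ℂ) + t * Complex.I)‖
      ≤ 2 * ((max C1 0 * (1 + T)⁻¹ + T⁻¹) * (1 + 2 * δ)) := by
    intro T hT
    have hTpos : (0:ℝ) < T := by linarith
    have hd : DifferentiableOn ℂ g
        (Set.uIcc (-(δ:ℂ) + (-T:ℝ) * Complex.I).re (1 + (δ:ℂ) + (T:ℝ) * Complex.I).re ×ℂ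
         Set.uIcc (-(δ:ℂ) + (-T:ℝ) * Complex.I).im (1 + (δ:ℂ) + (T:ℝ) * Complex.I).im) := by
      apply hg.mono
      intro s hs
      rw [Complex.mem_reProdIm] at hs
      have h1 := hs.1
      have e1 : (-(δ:ℂ) + (-T:ℝ) * Complex.I).re = -δ := by simp
      have e2 : (1 + (δ:ℂ) + (T:ℝ) * Complex.I).re = 1 + δ := hre1 T
      rw [e1, e2, Set.uIcc_of_le (by linarith)] at h1
      obtain ⟨ha, hb⟩ := Set.mem_Icc.mp h1
      exact ⟨by linarith, by linarith⟩
    have h0 := Complex.integral_boundary_rect_eq_zero_of_differentiableOn g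
      (-(δ:ℂ) + (-T:ℝ) * Complex.I) (1 + (δ:ℂ) + (T:ℝ) * Complex.I) hd
    have hzre : (-(δ:ℂ) + (-T:ℝ) * Complex.I).re = -δ := by simp
    have hzim : (-(δ:ℂ) + (-T:ℝ) * Complex.I).im = -T := by simp
    have hwre : (1 + (δ:ℂ) + (T:ℝ) * Complex.I).re = 1 + δ := hre1 T
    have hwim : (1 + (δ:ℂ) + (T:ℝ) * Complex.I).im = T := him1 T
    rw [hzre, hzim, hwre, hwim, smul_eq_mul, smul_eq_mul] at h0
    push_cast at h0
    have key : Complex.I * ((∫ t in (-T)..T, g (1 + δ + t * Complex.I))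
        - ∫ t in (-T)..T, g (-(δ:ℂ) + t * Complex.I))
        = (∫ x in (-δ:ℝ)..(1+δ:ℝ), g (x + (T:ℂ) * Complex.I))
          - ∫ x in (-δ:ℝ)..(1+δ:ℝ), g (x + -(T:ℂ) * Complex.I) := by
      linear_combination h0
    have hb1 : ‖∫ x in (-δ:ℝ)..(1+δ:ℝ), g (x + (T:ℂ) * Complex.I)‖
        ≤ (max C1 0 * (1 + T)⁻¹ + T⁻¹) * (1 + 2 * δ) := by
      have := intervalIntegral.norm_integral_le_of_norm_le_const
        (C := max C1 0 * (1 + T)⁻¹ + T⁻¹)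
        (f := fun x : ℝ => g (x + (T:ℂ) * Complex.I)) (a := (-δ:ℝ)) (b := (1+δ:ℝ)) ?_
      · calc ‖∫ x in (-δ:ℝ)..(1+δ:ℝ), g (x + (T:ℂ) * Complex.I)‖
            ≤ (max C1 0 * (1 + T)⁻¹ + T⁻¹) * |(1+δ:ℝ) - (-δ)| := this
          _ = (max C1 0 * (1 + T)⁻¹ + T⁻¹) * (1 + 2 * δ) := by
              rw [show ((1+δ:ℝ) - (-δ)) = 1 + 2*δ by ring, abs_of_pos (by linarith)]
      · intro x hx
        rw [Set.uIoc_of_le (by linarith)] at hx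
        have hre : ((x:ℂ) + (T:ℂ) * Complex.I).re = x := by simp
        have him : ((x:ℂ) + (T:ℂ) * Complex.I).im = T := by simp
        have := hgb ((x:ℂ) + (T:ℂ) * Complex.I) (by rw [hre]; linarith [hx.1])
          (by rw [hre]; exact hx.2) (by rw [him, abs_of_pos hTpos]; exact hT)
        rwa [him, abs_of_pos hTpos] at this
    have hb2 : ‖∫ x in (-δ:ℝ)..(1+δ:ℝ), g (x + -(T:ℂ) * Complex.I)‖
        ≤ (max C1 0 * (1 + T)⁻¹ + T⁻¹) * (1 + 2 * δ) := by
      have := intervalIntegral.norm_integral_le_of_norm_le_const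
        (C := max C1 0 * (1 + T)⁻¹ + T⁻¹)
        (f := fun x : ℝ => g (x + -(T:ℂ) * Complex.I)) (a := (-δ:ℝ)) (b := (1+δ:ℝ)) ?_
      · calc ‖∫ x in (-δ:ℝ)..(1+δ:ℝ), g (x + -(T:ℂ) * Complex.I)‖
            ≤ (max C1 0 * (1 + T)⁻¹ + T⁻¹) * |(1+δ:ℝ) - (-δ)| := this
          _ = (max C1 0 * (1 + T)⁻¹ + T⁻¹) * (1 + 2 * δ) := by
              rw [show ((1+δ:ℝ) - (-δ)) = 1 + 2*δ by ring, abs_of_pos (by linarith)]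
      · intro x hx
        rw [Set.uIoc_of_le (by linarith)] at hx
        have hre : ((x:ℂ) + -(T:ℂ) * Complex.I).re = x := by simp
        have him : ((x:ℂ) + -(T:ℂ) * Complex.I).im = -T := by simp
        have := hgb ((x:ℂ) + -(T:ℂ) * Complex.I) (by rw [hre]; linarith [hx.1])
          (by rw [hre]; exact hx.2) (by rw [him, abs_neg, abs_of_pos hTpos]; exact hT)
        rwa [him, abs_neg, abs_of_pos hTpos] at this
    calc ‖(∫ t in (-T)..T, g (1 + δ + t * Complex.I))
          - ∫ t in (-T)..T, g (-(δ:ℂ) + t * Complex.I)‖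
        = ‖Complex.I * ((∫ t in (-T)..T, g (1 + δ + t * Complex.I))
          - ∫ t in (-T)..T, g (-(δ:ℂ) + t * Complex.I))‖ := by
          rw [norm_mul, Complex.norm_I, one_mul]
      _ = ‖(∫ x in (-δ:ℝ)..(1+δ:ℝ), g (x + (T:ℂ) * Complex.I))
          - ∫ x in (-δ:ℝ)..(1+δ:ℝ), g (x + -(T:ℂ) * Complex.I)‖ := by rw [key]
      _ ≤ ‖∫ x in (-δ:ℝ)..(1+δ:ℝ), g (x + (T:ℂ) * Complex.I)‖
          + ‖∫ x in (-δ:ℝ)..(1+δ:ℝ), g (x + -(T:ℂ) * Complex.I)‖ := norm_sub_le _ _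
      _ ≤ 2 * ((max C1 0 * (1 + T)⁻¹ + T⁻¹) * (1 + 2 * δ)) := by linarith
  -- the g-part tends to 0
  have hb0 : Tendsto (fun T : ℝ => 2 * ((max C1 0 * (1 + T)⁻¹ + T⁻¹) * (1 + 2 * δ)))
      atTop (𝓝 0) := by
    have l1 : Tendsto (fun T : ℝ => (1 + T)⁻¹) atTop (𝓝 0) :=
      tendsto_inv_atTop_zero.comp (tendsto_atTop_add_const_left atTop 1 tendsto_id)
    have l2 : Tendsto (fun T : ℝ => T⁻¹) atTop (𝓝 (0:ℝ)) := tendsto_inv_atTop_zero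
    have := (((l1.const_mul (max C1 0)).add l2).mul_const (1 + 2 * δ)).const_mul 2
    simpa using this
  have hGlim : Tendsto (fun T : ℝ => (∫ t in (-T)..T, g (1 + δ + t * Complex.I))
      - ∫ t in (-T)..T, g (-(δ:ℂ) + t * Complex.I)) atTop (𝓝 0) := by
    apply squeeze_zero_norm' _ hb0
    filter_upwards [eventually_ge_atTop (1:ℝ)] with T hT
    exact hGnorm T hT
  -- the pole part
  have hp1 : ∀ T : ℝ, ∫ t in (-T)..T, ((δ:ℂ) + t * Complex.I)⁻¹
      = ((2 * Real.arctan (T / δ) : ℝ) : ℂ) := fun T => pole_line_integral δ T hδ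
  have hp2 : ∀ T : ℝ, ∫ t in (-T)..T, (1 + (δ:ℂ) + t * Complex.I)⁻¹
      = ((2 * Real.arctan (T / (1 + δ)) : ℝ) : ℂ) := by
    intro T
    have h := pole_line_integral (1 + δ) T (by linarith)
    rw [← h]
    apply intervalIntegral.integral_congr
    intro t _
    congr 1
    push_cast
    ring
  have harc1 : Tendsto (fun T : ℝ => Real.arctan (T / δ)) atTop (𝓝 (π / 2)) :=
    (tendsto_nhds_of_tendsto_nhdsWithin Real.tendsto_arctan_atTop).comp
      (Tendsto.atTop_div_const hδ tendsto_id)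
  have harc2 : Tendsto (fun T : ℝ => Real.arctan (T / (1 + δ))) atTop (𝓝 (π / 2)) :=
    (tendsto_nhds_of_tendsto_nhdsWithin Real.tendsto_arctan_atTop).comp
      (Tendsto.atTop_div_const (by linarith) tendsto_id)
  have hPlim : Tendsto (fun T : ℝ =>
      ((2 * Real.arctan (T / δ) + 2 * Real.arctan (T / (1 + δ)) : ℝ) : ℂ))
      atTop (𝓝 ((2 * π : ℝ) : ℂ)) := by
    have hr : Tendsto (fun T : ℝ => 2 * Real.arctan (T / δ) + 2 * Real.arctan (T / (1 + δ)))
        atTop (𝓝 (2 * (π / 2) + 2 * (π / 2))) := (harc1.const_mul 2).add (harc2.const_mul 2)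
    have he : (2 * (π / 2) + 2 * (π / 2) : ℝ) = 2 * π := by ring
    rw [he] at hr
    exact (Complex.continuous_ofReal.tendsto _).comp hr
  -- evaluation of the truncated integral of F
  have heval : ∀ T : ℝ, ∫ t in (-T)..T, F t
      = ((∫ t in (-T)..T, g (1 + δ + t * Complex.I))
        - ∫ t in (-T)..T, g (-(δ:ℂ) + t * Complex.I))
      + ((2 * Real.arctan (T / δ) + 2 * Real.arctan (T / (1 + δ)) : ℝ) : ℂ) := by
    intro T
    rw [hsplit T, hflip T, hp1 T, hp2 T]
    push_cast
    ring
  have hlim2 : Tendsto (fun T : ℝ => ∫ t in (-T)..T, F t) atTop (𝓝 (0 + ((2 * π : ℝ) : ℂ))) :=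
    (hGlim.add hPlim).congr (fun T => (heval T).symm)
  have hint : ∫ t, F t = ((2 * π : ℝ) : ℂ) := by
    have h := tendsto_nhds_unique hlim1 hlim2
    rw [h, zero_add]
  rw [hint, ← Complex.ofReal_mul, show (1 / (2 * π) * (2 * π) : ℝ) = 1 by
    field_simp, Complex.ofReal_one]
end

section
/- Let M be a squarefree positive integer and Γ = Γ₀(M). As d ranges over the positive divisors of M and j over a set of representatives of ℤ/d, the matrices τ_d · n(j) (with n(j) = [[1,j],[0,1]] and τ_d as above) form a complete set of representatives for the right cosets Γ \\ SL₂(ℤ). -/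
open Matrix CongruenceSubgroup
open scoped MatrixGroups

/-- `τ` is congruent to `[[0,1],[-1,0]]` entrywise mod `d`. -/
def CongW (τ : SL(2, ℤ)) (d : ℕ) : Prop :=
  ((τ : Matrix (Fin 2) (Fin 2) ℤ) 0 0 ≡ 0 [ZMOD (d : ℤ)]) ∧
  ((τ : Matrix (Fin 2) (Fin 2) ℤ) 0 1 ≡ 1 [ZMOD (d : ℤ)]) ∧
  ((τ : Matrix (Fin 2) (Fin 2) ℤ) 1 0 ≡ -1 [ZMOD (d : ℤ)]) ∧
  ((τ : Matrix (Fin 2) (Fin 2) ℤ) 1 1 ≡ 0 [ZMOD (d : ℤ)])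

/-- `τ` is congruent to the identity entrywise mod `m`. -/
def CongId (τ : SL(2, ℤ)) (m : ℕ) : Prop :=
  ((τ : Matrix (Fin 2) (Fin 2) ℤ) 0 0 ≡ 1 [ZMOD (m : ℤ)]) ∧
  ((τ : Matrix (Fin 2) (Fin 2) ℤ) 0 1 ≡ 0 [ZMOD (m : ℤ)]) ∧
  ((τ : Matrix (Fin 2) (Fin 2) ℤ) 1 0 ≡ 0 [ZMOD (m : ℤ)]) ∧
  ((τ : Matrix (Fin 2) (Fin 2) ℤ) 1 1 ≡ 1 [ZMOD (m : ℤ)])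

/-- The unipotent matrix `n(j) = [[1, j],[0, 1]]` in `SL₂(ℤ)`. -/
def upperUnip (j : ℕ) : SL(2, ℤ) :=
  ⟨!![1, (j : ℤ); 0, 1], by simp [Matrix.det_fin_two_of]⟩

private lemma entry10 (g h : SL(2, ℤ)) :
    ((g * h⁻¹ : SL(2, ℤ)) : Matrix (Fin 2) (Fin 2) ℤ) 1 0 =
      (g : Matrix (Fin 2) (Fin 2) ℤ) 1 0 * (h : Matrix (Fin 2) (Fin 2) ℤ) 1 1
        - (g : Matrix (Fin 2) (Fin 2) ℤ) 1 1 * (h : Matrix (Fin 2) (Fin 2) ℤ) 1 0 := by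
  rw [Matrix.SpecialLinearGroup.coe_mul, Matrix.SpecialLinearGroup.coe_inv]
  simp [Matrix.mul_apply, Fin.sum_univ_two, Matrix.adjugate_fin_two]
  ring

private lemma unip11 (tt : SL(2,ℤ)) (j : ℕ) :
    ((tt * upperUnip j : SL(2,ℤ)) : Matrix (Fin 2) (Fin 2) ℤ) 1 1 =
      (tt : Matrix (Fin 2) (Fin 2) ℤ) 1 0 * j + (tt : Matrix (Fin 2) (Fin 2) ℤ) 1 1 := by
  rw [Matrix.SpecialLinearGroup.coe_mul]
  simp [upperUnip, Matrix.SpecialLinearGroup.coe_mul, Matrix.mul_apply, Fin.sum_univ_two]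

private lemma unip10 (tt : SL(2,ℤ)) (j : ℕ) :
    ((tt * upperUnip j : SL(2,ℤ)) : Matrix (Fin 2) (Fin 2) ℤ) 1 0 =
      (tt : Matrix (Fin 2) (Fin 2) ℤ) 1 0 := by
  rw [Matrix.SpecialLinearGroup.coe_mul]
  simp [upperUnip, Matrix.SpecialLinearGroup.coe_mul, Matrix.mul_apply, Fin.sum_univ_two]

/-- For `a ∣ b ∣ M`, `M / b ∣ M / a`. -/
private lemma div_dvd_div_of_dvd {a b M : ℕ} (hab : a ∣ b) (hbM : b ∣ M) (ha : 0 < a)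
    (hb : 0 < b) : M / b ∣ M / a := by
  obtain ⟨t, rfl⟩ := hab
  obtain ⟨s, rfl⟩ := hbM
  have ht : 0 < t := Nat.pos_of_ne_zero (by rintro rfl; simp at hb)
  rw [Nat.mul_div_cancel_left _ (Nat.mul_pos ha ht), Nat.mul_assoc,
    Nat.mul_div_cancel_left _ ha]
  exact ⟨t, Nat.mul_comm _ _⟩

/-- Let `M` be a squarefree positive integer and `Γ = Γ₀(M)`.  Given elements
`τ_d ∈ SL₂(ℤ)` (for `d ∣ M`) with `τ_d ≡ [[0,1],[-1,0]] mod d` and `τ_d ≡ 1 mod M/d`,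
the matrices `τ_d · n(j)`, for `d ∣ M` and `0 ≤ j < d`, form a complete set of
representatives for the right cosets `Γ₀(M) \ SL₂(ℤ)`. -/
theorem gamma0_coset_reps (M : ℕ) (hM : 0 < M) (hsq : Squarefree M)
    (τ : ℕ → SL(2, ℤ)) (hτ : ∀ d : ℕ, d ∣ M → CongW (τ d) d ∧ CongId (τ d) (M / d)) :
    ∀ g : SL(2, ℤ), ∃! p : ℕ × ℕ,
      p.1 ∣ M ∧ p.2 < p.1 ∧ g * (τ p.1 * upperUnip p.2)⁻¹ ∈ Gamma0 M := by
  intro g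
  set c : ℤ := (g : Matrix (Fin 2) (Fin 2) ℤ) 1 0 with hc
  set e : ℤ := (g : Matrix (Fin 2) (Fin 2) ℤ) 1 1 with he
  -- coprimality of the bottom row
  have hdet : (g : Matrix (Fin 2) (Fin 2) ℤ) 0 0 * e -
      (g : Matrix (Fin 2) (Fin 2) ℤ) 0 1 * c = 1 := by
    have := g.2
    rw [Matrix.det_fin_two] at this
    linarith [this]
  have hce : IsCoprime c e :=
    ⟨-(g : Matrix (Fin 2) (Fin 2) ℤ) 0 1, (g : Matrix (Fin 2) (Fin 2) ℤ) 0 0, by linarith⟩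
  -- coprimality of complementary divisors
  have hcop : ∀ d : ℕ, d ∣ M → Nat.Coprime d (M / d) := by
    intro d hd
    have h2 : Nat.gcd d (M / d) * Nat.gcd d (M / d) ∣ M := by
      calc Nat.gcd d (M / d) * Nat.gcd d (M / d) ∣ d * (M / d) :=
            Nat.mul_dvd_mul (Nat.gcd_dvd_left _ _) (Nat.gcd_dvd_right _ _)
        _ = M := Nat.mul_div_cancel' hd
    exact Nat.isUnit_iff.mp (hsq _ h2)
  -- the membership criterion
  have key : ∀ d : ℕ, d ∣ M → ∀ j : ℕ,
      (g * (τ d * upperUnip j)⁻¹ ∈ Gamma0 M ↔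
        ((d : ℤ) ∣ e - (j : ℤ) * c ∧ ((M / d : ℕ) : ℤ) ∣ c)) := by
    intro d hd j
    obtain ⟨hW, hId⟩ := hτ d hd
    set γ : ℤ := ((τ d) : Matrix (Fin 2) (Fin 2) ℤ) 1 0 with hγ
    set δ : ℤ := ((τ d) : Matrix (Fin 2) (Fin 2) ℤ) 1 1 with hδ
    have hx : ((g * (τ d * upperUnip j)⁻¹ : SL(2, ℤ)) : Matrix (Fin 2) (Fin 2) ℤ) 1 0 =
        c * (γ * j + δ) - e * γ := by
      rw [entry10, unip11, unip10]
    set x : ℤ := c * (γ * j + δ) - e * γ with hxdef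
    have hmem : g * (τ d * upperUnip j)⁻¹ ∈ Gamma0 M ↔ (M : ℤ) ∣ x := by
      rw [Gamma0_mem]
      rw [show ((g * (τ d * upperUnip j) ⁻¹ : SL(2,ℤ)) 1 0 : ℤ) = x from hx]
      exact ZMod.intCast_zmod_eq_zero_iff_dvd x M
    -- mod d
    have hmodd : x ≡ e - (j : ℤ) * c [ZMOD (d : ℤ)] := by
      have h1 : γ * (j : ℤ) + δ ≡ (-1) * (j : ℤ) + 0 [ZMOD (d : ℤ)] :=
        (hW.2.2.1.mul_right _).add hW.2.2.2
      have h2 : x ≡ c * ((-1) * (j : ℤ) + 0) - e * (-1) [ZMOD (d : ℤ)] :=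
        (h1.mul_left c).sub (hW.2.2.1.mul_left e)
      have h3 : c * ((-1) * (j : ℤ) + 0) - e * (-1) = e - (j : ℤ) * c := by ring
      rwa [h3] at h2
    -- mod M/d
    have hmodm : x ≡ c [ZMOD ((M / d : ℕ) : ℤ)] := by
      have h1 : γ * (j : ℤ) + δ ≡ 0 * (j : ℤ) + 1 [ZMOD ((M / d : ℕ) : ℤ)] :=
        (hId.2.2.1.mul_right _).add hId.2.2.2
      have h2 : x ≡ c * (0 * (j : ℤ) + 1) - e * 0 [ZMOD ((M / d : ℕ) : ℤ)] :=
        (h1.mul_left c).sub (hId.2.2.1.mul_left e)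
      have h3 : c * ((0 : ℤ) * (j : ℤ) + 1) - e * 0 = c := by ring
      rwa [h3] at h2
    have hdd : (d : ℤ) ∣ x ↔ (d : ℤ) ∣ e - (j : ℤ) * c := by
      constructor
      · intro h
        exact (Int.modEq_zero_iff_dvd).mp (hmodd.symm.trans (Int.modEq_zero_iff_dvd.mpr h))
      · intro h
        exact (Int.modEq_zero_iff_dvd).mp (hmodd.trans (Int.modEq_zero_iff_dvd.mpr h))
    have hmm : ((M / d : ℕ) : ℤ) ∣ x ↔ ((M / d : ℕ) : ℤ) ∣ c := by
      constructor
      · intro h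
        exact (Int.modEq_zero_iff_dvd).mp (hmodm.symm.trans (Int.modEq_zero_iff_dvd.mpr h))
      · intro h
        exact (Int.modEq_zero_iff_dvd).mp (hmodm.trans (Int.modEq_zero_iff_dvd.mpr h))
    have hMdvd : (M : ℤ) ∣ x ↔ ((d : ℤ) ∣ x ∧ ((M / d : ℕ) : ℤ) ∣ x) := by
      constructor
      · intro h
        refine ⟨dvd_trans ?_ h, dvd_trans ?_ h⟩
        · exact_mod_cast Int.natCast_dvd_natCast.mpr hd
        · exact_mod_cast Int.natCast_dvd_natCast.mpr (Nat.div_dvd_of_dvd hd)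
      · rintro ⟨h1, h2⟩
        have hco : IsCoprime (d : ℤ) ((M / d : ℕ) : ℤ) :=
          Int.isCoprime_iff_gcd_eq_one.mpr (by
            rw [Int.gcd_natCast_natCast]; exact hcop d hd)
        have := hco.mul_dvd h1 h2
        rwa [show ((d : ℤ) * ((M / d : ℕ) : ℤ)) = (M : ℤ) by
          rw [← Nat.cast_mul, Nat.mul_div_cancel' hd]] at this
    rw [hmem, hMdvd, hdd, hmm]
  -- the canonical divisor
  set G : ℕ := Nat.gcd c.natAbs M with hG
  have hGM : G ∣ M := Nat.gcd_dvd_right _ _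
  have hGpos : 0 < G := Nat.gcd_pos_of_pos_right _ hM
  have hGc : (G : ℤ) ∣ c := (Int.natCast_dvd_natCast.mpr (Nat.gcd_dvd_left _ _)).trans
    (Int.natAbs_dvd.mpr dvd_rfl)
  set d : ℕ := M / G with hd
  have hdM : d ∣ M := Nat.div_dvd_of_dvd hGM
  have hMd : M / d = G := Nat.div_div_self hGM hM.ne'
  have hdpos : 0 < d := Nat.div_pos (Nat.le_of_dvd hM hGM) hGpos
  -- gcd(c, d) = 1
  have hcd : Nat.Coprime c.natAbs d := by
    have h1 : Nat.gcd c.natAbs d ∣ G := Nat.dvd_gcd (Nat.gcd_dvd_left _ _)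
      ((Nat.gcd_dvd_right _ _).trans hdM)
    have h2 : Nat.gcd c.natAbs d ∣ M / G := Nat.gcd_dvd_right _ _
    have h3 : Nat.gcd c.natAbs d ∣ 1 := by
      have := hcop G hGM
      exact this ▸ Nat.dvd_gcd h1 h2
    exact Nat.dvd_one.mp h3
  have hcdInt : IsCoprime c (d : ℤ) :=
    Int.isCoprime_iff_gcd_eq_one.mpr (by rwa [Int.gcd, Int.natAbs_natCast])
  -- choose j
  obtain ⟨u, v, huv⟩ := hcdInt
  set j0 : ℤ := (u * e) % (d : ℤ) with hj0
  have hj0nonneg : 0 ≤ j0 := Int.emod_nonneg _ (by exact_mod_cast hdpos.ne')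
  have hj0lt : j0 < (d : ℤ) := Int.emod_lt_of_pos _ (by exact_mod_cast hdpos)
  set j : ℕ := j0.toNat with hjdef
  have hjcast : (j : ℤ) = j0 := Int.toNat_of_nonneg hj0nonneg
  have hjlt : j < d := by
    have := hj0lt
    omega
  have hjdvd : (d : ℤ) ∣ e - (j : ℤ) * c := by
    have h1 : j0 ≡ u * e [ZMOD (d : ℤ)] := Int.emod_emod_of_dvd _ dvd_rfl
    have h2 : e - (j : ℤ) * c ≡ e - (u * e) * c [ZMOD (d : ℤ)] := by
      rw [hjcast]
      exact Int.ModEq.sub (Int.ModEq.refl e) (h1.mul_right c)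
    have h3 : e - (u * e) * c = e * (v * (d : ℤ)) := by
      linear_combination (-e) * huv
    have h4 : (d : ℤ) ∣ e - (u * e) * c := ⟨e * v, by rw [h3]; ring⟩
    exact (Int.modEq_zero_iff_dvd).mp (h2.trans (Int.modEq_zero_iff_dvd.mpr h4))
  -- coprimality of candidate divisors with c, via the congruence condition
  have hcopc : ∀ d₁ : ℕ, d₁ ∣ M → ∀ j₁ : ℕ, (d₁ : ℤ) ∣ e - (j₁ : ℤ) * c →
      Nat.Coprime c.natAbs d₁ := by
    intro d₁ hd₁ j₁ hj₁
    set k : ℕ := Nat.gcd c.natAbs d₁ with hk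
    have hkc : (k : ℤ) ∣ c := (Int.natCast_dvd_natCast.mpr (Nat.gcd_dvd_left _ _)).trans
      (Int.natAbs_dvd.mpr dvd_rfl)
    have hkd : (k : ℤ) ∣ (d₁ : ℤ) := Int.natCast_dvd_natCast.mpr (Nat.gcd_dvd_right _ _)
    have hke : (k : ℤ) ∣ e := by
      have h1 : (k : ℤ) ∣ e - (j₁ : ℤ) * c := hkd.trans hj₁
      have h2 : (k : ℤ) ∣ (j₁ : ℤ) * c := Dvd.dvd.mul_left hkc _
      have := dvd_add h1 h2
      rwa [sub_add_cancel] at this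
    obtain ⟨x, y, hxy⟩ := hce
    have : (k : ℤ) ∣ 1 := by
      rw [← hxy]
      exact dvd_add (Dvd.dvd.mul_left hkc x) (Dvd.dvd.mul_left hke y)
    exact Nat.dvd_one.mp (by exact_mod_cast this)
  -- uniqueness of the divisor
  have huniq_d : ∀ d₁ : ℕ, d₁ ∣ M → ∀ j₁ : ℕ, (d₁ : ℤ) ∣ e - (j₁ : ℤ) * c →
      ((M / d₁ : ℕ) : ℤ) ∣ c → d₁ = d := by
    intro d₁ hd₁ j₁ hj₁ hMd₁
    have hd₁pos : 0 < d₁ := Nat.pos_of_dvd_of_pos hd₁ hM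
    have hcc : Nat.Coprime c.natAbs d₁ := hcopc d₁ hd₁ j₁ hj₁
    -- M/d₁ ∣ G
    have h1 : M / d₁ ∣ c.natAbs := by
      rwa [Int.natCast_dvd] at hMd₁
    have h2 : M / d₁ ∣ G := Nat.dvd_gcd h1 (Nat.div_dvd_of_dvd hd₁)
    -- d ∣ d₁
    have h3 : d ∣ d₁ := by
      have h4 : M / G ∣ M / (M / d₁) :=
        div_dvd_div_of_dvd h2 hGM (Nat.div_pos (Nat.le_of_dvd hM hd₁) hd₁pos) hGpos
      rwa [Nat.div_div_self hd₁ hM.ne'] at h4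
    -- d₁ ∣ d
    have h5 : d₁ ∣ d := by
      have h6 : d₁ ∣ G * (M / G) := by rw [Nat.mul_div_cancel' hGM]; exact hd₁
      have h7 : Nat.Coprime d₁ G :=
        Nat.Coprime.coprime_dvd_right (Nat.gcd_dvd_left _ _) hcc.symm
      exact (Nat.Coprime.dvd_of_dvd_mul_left h7 h6)
    exact Nat.dvd_antisymm h5 h3
  -- assemble
  refine ⟨(d, j), ⟨hdM, hjlt, (key d hdM j).mpr ⟨hjdvd, by rw [hMd]; exact hGc⟩⟩, ?_⟩
  rintro ⟨d₁, j₁⟩ ⟨hd₁, hj₁lt, hmem₁⟩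
  obtain ⟨hdvd₁, hMdvd₁⟩ := (key d₁ hd₁ j₁).mp hmem₁
  have hdd : d₁ = d := huniq_d d₁ hd₁ j₁ hdvd₁ hMdvd₁
  subst hdd
  simp only at hj₁lt
  have hdiff : (d : ℤ) ∣ ((j : ℤ) - (j₁ : ℤ)) * c := by
    have hh : (e - (j₁ : ℤ) * c) - (e - (j : ℤ) * c) = ((j : ℤ) - (j₁ : ℤ)) * c := by ring
    rw [← hh]
    exact dvd_sub hdvd₁ hjdvd
  have hco : IsCoprime ((d : ℕ) : ℤ) c :=
    Int.isCoprime_iff_gcd_eq_one.mpr (by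
      rw [Int.gcd, Int.natAbs_natCast, Nat.gcd_comm]; exact hcd)
  have hjj : (d : ℤ) ∣ (j : ℤ) - (j₁ : ℤ) := hco.dvd_of_dvd_mul_right hdiff
  have hz : ((j : ℤ) - (j₁ : ℤ)) = 0 := by
    apply Int.eq_zero_of_abs_lt_dvd hjj
    rw [abs_sub_lt_iff]
    constructor <;> omega
  have hj₁j : j₁ = j := by omega
  simp [hj₁j]
end

section
/- Let f(z) = Σ_{n≥1} a_n e^{2πinz} be a holomorphic cusp form of weight k on a lattice Γ containing [[1,1],[0,1]], and let δ_k = (−4π)·(1/(2πi))(∂/∂z + k/(2iy)) be the Shimura–Maass raising operator. Then for every ℓ ≥ 0 the ℓ-fold Shimura–Maass derivative has the expansion δ^ℓ f(z) = y^{−ℓ} ℓ! Σ_{n≥1} L_ℓ^{(k−1)}(4πny) a_n e^{2πinz}, where L_ℓ^{(k−1)} is the generalized Laguerre polynomial. -/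
open Complex Real Function

/-- The Cauchy–Riemann operator `∂/∂z = (∂/∂x - i ∂/∂y)/2` applied to a
(not necessarily holomorphic) function `g : ℂ → ℂ`. -/
noncomputable def dz (g : ℂ → ℂ) (p : ℂ) : ℂ :=
  (fderiv ℝ g p 1 - Complex.I * fderiv ℝ g p Complex.I) / 2

/-- The Shimura–Maass raising operator of weight `k`:
`δ_k = (-4π) (1/(2πi)) (∂/∂z + k/(2iy)) = 2i (∂/∂z + k/(2iy))`. -/
noncomputable def shimuraMaass (k : ℂ) (g : ℂ → ℂ) : ℂ → ℂ :=
  fun z => 2 * Complex.I * (dz g z + k / (2 * Complex.I * (z.im : ℂ)) * g z)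

/-- `δ^ℓ = δ_{k+2ℓ-2} ∘ ⋯ ∘ δ_{k+2} ∘ δ_k`, the iterated Shimura–Maass derivative. -/
noncomputable def iterSM (k : ℕ) : ℕ → (ℂ → ℂ) → (ℂ → ℂ)
  | 0, g => g
  | (ℓ + 1), g => shimuraMaass ((k : ℂ) + 2 * ℓ) (iterSM k ℓ g)

/-- The generalized Laguerre polynomial
`L_ℓ^{(α)}(x) = Σ_{i=0}^{ℓ} ((-x)^i / i!) C(ℓ+α, ℓ-i)`. -/
noncomputable def laguerre (ℓ α : ℕ) (x : ℂ) : ℂ :=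
  ∑ i ∈ Finset.range (ℓ + 1), ((-x) ^ i / (i.factorial : ℂ)) * (Nat.choose (ℓ + α) (ℓ - i) : ℂ)

/- aux -/
noncomputable section
namespace SMproof


def qterm (n : ℕ) (z : ℂ) : ℂ := Complex.exp (2 * Real.pi * Complex.I * ((n : ℂ) + 1) * z)

lemma norm_qterm (n : ℕ) (z : ℂ) :
    ‖qterm n z‖ = Real.exp (((n : ℝ) + 1) * (-(2 * Real.pi * z.im))) := by
  rw [qterm, Complex.norm_exp]
  congr 1
  simp [Complex.mul_re, Complex.mul_im]
  ring

lemma summable_pow_mul_exp (m : ℕ) {y : ℝ} (hy : 0 < y) :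
    Summable (fun n : ℕ => ((n : ℝ) + 1) ^ m * Real.exp (-y) ^ (n + 1)) := by
  have hr1 : Real.exp (-y) < 1 := by
    rw [Real.exp_lt_one_iff]; linarith
  have hs : Summable (fun n : ℕ => (n : ℝ) ^ m * Real.exp (-y) ^ n) :=
    summable_pow_mul_geometric_of_norm_lt_one m
      (by rw [Real.norm_eq_abs, abs_of_pos (Real.exp_pos _)]; exact hr1)
  have := (summable_nat_add_iff 1).mpr hs
  apply this.congr
  intro n; push_cast; ring

lemma summable_qmul {b : ℕ → ℂ} {C : ℝ} {m : ℕ}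
    (hb : ∀ n, ‖b n‖ ≤ C * ((n : ℝ) + 1) ^ m) {z : ℂ} (hz : 0 < z.im) :
    Summable fun n => b n * qterm n z := by
  have h2pi : 0 < 2 * Real.pi * z.im := by positivity
  have hs2 : Summable (fun n : ℕ => C * (((n : ℝ) + 1) ^ m * Real.exp (-(2 * Real.pi * z.im)) ^ (n + 1))) :=
    (summable_pow_mul_exp m h2pi).mul_left C
  apply Summable.of_norm_bounded hs2
  intro n
  rw [norm_mul, norm_qterm]
  have h1 : Real.exp (((n : ℝ) + 1) * (-(2 * Real.pi * z.im)))
      = Real.exp (-(2 * Real.pi * z.im)) ^ (n + 1) := by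
    rw [← Real.exp_nat_mul]
    congr 1; push_cast; ring
  rw [h1]
  have hexp : (0:ℝ) ≤ Real.exp (-(2 * Real.pi * z.im)) ^ (n + 1) :=
    le_of_lt (pow_pos (Real.exp_pos _) _)
  nlinarith [hb n, hexp, norm_nonneg (b n)]


lemma hasDerivAt_term (b : ℕ → ℂ) (n : ℕ) (w : ℂ) :
    HasDerivAt (fun w => b n * qterm n w)
      ((2 * Real.pi * Complex.I * ((n : ℂ) + 1)) * (b n * qterm n w)) w := by
  have h0 : HasDerivAt (fun w : ℂ => (2 * Real.pi * Complex.I * ((n : ℂ) + 1)) * w)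
      (2 * Real.pi * Complex.I * ((n : ℂ) + 1)) w := by
    simpa using (hasDerivAt_id w).const_mul (2 * (Real.pi:ℂ) * Complex.I * ((n : ℂ) + 1))
  have h2 := (h0.cexp).const_mul (b n)
  refine h2.congr_deriv ?_
  simp [qterm]; ring

lemma norm_two_pi_I_mul (n : ℕ) :
    ‖(2 * (Real.pi:ℂ) * Complex.I * ((n : ℂ) + 1))‖ = 2 * Real.pi * ((n:ℝ) + 1) := by
  have h : ((n:ℂ) + 1) = (((n:ℝ) + 1 : ℝ) : ℂ) := by push_cast; ring
  rw [h, show (2 * (Real.pi:ℂ) * Complex.I * (((n:ℝ) + 1 : ℝ) : ℂ))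
      = ((2 * Real.pi * ((n:ℝ) + 1) : ℝ) : ℂ) * Complex.I by push_cast; ring]
  rw [norm_mul, Complex.norm_real, Complex.norm_I, mul_one]
  exact _root_.abs_of_nonneg (by positivity)

lemma hasDerivAt_qsum {b : ℕ → ℂ} {C : ℝ} {m : ℕ}
    (hb : ∀ n, ‖b n‖ ≤ C * ((n : ℝ) + 1) ^ m) {z : ℂ} (hz : 0 < z.im) :
    HasDerivAt (fun w => ∑' n, b n * qterm n w)
      (∑' (n : ℕ), (2 * Real.pi * Complex.I * ((n : ℂ) + 1)) * (b n * qterm n z)) z := by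
  have hC : 0 ≤ C := le_trans (norm_nonneg (b 0)) (by simpa using hb 0)
  have ht : IsOpen {w : ℂ | z.im / 2 < w.im} := isOpen_lt continuous_const Complex.continuous_im
  have htc : Convex ℝ {w : ℂ | z.im / 2 < w.im} := convex_halfSpace_im_gt _
  have hzt : z ∈ {w : ℂ | z.im / 2 < w.im} := by simp only [Set.mem_setOf_eq]; linarith
  have hu : Summable (fun n : ℕ =>
      (2 * Real.pi * C) * (((n : ℝ) + 1) ^ (m + 1) * Real.exp (-(Real.pi * z.im)) ^ (n + 1))) :=
    (summable_pow_mul_exp (m + 1) (by positivity)).mul_left _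
  refine hasDerivAt_tsum_of_isPreconnected hu ht htc.isPreconnected
    (fun n w _ => hasDerivAt_term b n w) ?_ hzt (summable_qmul hb hz) hzt
  intro n w hw
  rw [norm_mul, norm_two_pi_I_mul, norm_mul, norm_qterm]
  have hwim : z.im / 2 < w.im := hw
  have hmono : Real.exp (((n : ℝ) + 1) * (-(2 * Real.pi * w.im)))
      ≤ Real.exp (-(Real.pi * z.im)) ^ (n + 1) := by
    rw [← Real.exp_nat_mul]
    apply Real.exp_le_exp.mpr
    have hπ := Real.pi_pos
    push_cast
    apply mul_le_mul_of_nonneg_left _ (show (0:ℝ) ≤ (n:ℝ) + 1 by positivity)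
    nlinarith
  have hb' := hb n
  have h1 : (0:ℝ) ≤ ((n:ℝ) + 1) := by positivity
  have h2 : (0:ℝ) ≤ Real.exp (((n : ℝ) + 1) * (-(2 * Real.pi * w.im))) := (Real.exp_pos _).le
  have h3 : (0:ℝ) ≤ Real.exp (-(Real.pi * z.im)) ^ (n + 1) := (pow_pos (Real.exp_pos _) _).le
  have hπ := Real.pi_pos
  have hbn : (0:ℝ) ≤ ‖b n‖ := norm_nonneg _
  calc 2 * Real.pi * ((n:ℝ) + 1) * (‖b n‖ * Real.exp (((n : ℝ) + 1) * (-(2 * Real.pi * w.im))))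
      ≤ 2 * Real.pi * ((n:ℝ) + 1) * ((C * ((n : ℝ) + 1) ^ m) * Real.exp (-(Real.pi * z.im)) ^ (n + 1)) := by
        apply mul_le_mul_of_nonneg_left _ (by positivity)
        apply mul_le_mul hb' hmono h2 (by positivity)
    _ = (2 * Real.pi * C) * (((n : ℝ) + 1) ^ (m + 1) * Real.exp (-(Real.pi * z.im)) ^ (n + 1)) := by
        ring


def Hfun (a : ℕ → ℂ) (j : ℕ) (w : ℂ) : ℂ := ∑' (n : ℕ), ((n : ℂ) + 1) ^ j * a (n + 1) * qterm n w

lemma Hcoef_bound {a : ℕ → ℂ} {C : ℝ} {k : ℕ} (ha : ∀ n : ℕ, ‖a n‖ ≤ C * (n : ℝ) ^ k) (j : ℕ) :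
    ∀ n : ℕ, ‖((n : ℂ) + 1) ^ j * a (n + 1)‖ ≤ C * ((n : ℝ) + 1) ^ (j + k) := by
  intro n
  have h1 : ‖((n : ℂ) + 1) ^ j‖ = ((n : ℝ) + 1) ^ j := by
    rw [norm_pow, show ((n:ℂ) + 1) = (((n:ℝ) + 1 : ℝ) : ℂ) by push_cast; ring,
      Complex.norm_real, Real.norm_eq_abs, _root_.abs_of_nonneg (by positivity)]
  have h2 : ‖a (n + 1)‖ ≤ C * ((n : ℝ) + 1) ^ k := by
    have := ha (n + 1); push_cast at this ⊢; exact this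
  rw [norm_mul, h1, pow_add]
  have h3 : (0:ℝ) ≤ ((n:ℝ) + 1) ^ j := by positivity
  calc ((n : ℝ) + 1) ^ j * ‖a (n + 1)‖ ≤ ((n : ℝ) + 1) ^ j * (C * ((n : ℝ) + 1) ^ k) :=
        mul_le_mul_of_nonneg_left h2 h3
    _ = C * (((n : ℝ) + 1) ^ j * ((n : ℝ) + 1) ^ k) := by ring

lemma Hsummable {a : ℕ → ℂ} {C : ℝ} {k : ℕ} (ha : ∀ n : ℕ, ‖a n‖ ≤ C * (n : ℝ) ^ k) (j : ℕ)
    {z : ℂ} (hz : 0 < z.im) :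
    Summable fun n : ℕ => ((n : ℂ) + 1) ^ j * a (n + 1) * qterm n z :=
  summable_qmul (Hcoef_bound ha j) hz

lemma Hderiv {a : ℕ → ℂ} {C : ℝ} {k : ℕ} (ha : ∀ n : ℕ, ‖a n‖ ≤ C * (n : ℝ) ^ k) (j : ℕ)
    {z : ℂ} (hz : 0 < z.im) :
    HasDerivAt (Hfun a j) (2 * Real.pi * Complex.I * Hfun a (j + 1) z) z := by
  have h := hasDerivAt_qsum (Hcoef_bound ha j) hz
  have heq : (fun w => ∑' (n : ℕ), ((n : ℂ) + 1) ^ j * a (n + 1) * qterm n w) = Hfun a j := rfl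
  rw [heq] at h
  convert h using 1
  rw [Hfun, ← tsum_mul_left]
  exact tsum_congr fun n => by ring

def Lmap (α β : ℂ) : ℂ →L[ℝ] ℂ :=
  α • (ContinuousLinearMap.id ℝ ℂ) + β • (Complex.ofRealCLM.comp Complex.imCLM)

lemma Lmap_apply (α β v : ℂ) : Lmap α β v = α * v + β * (v.im : ℂ) := by
  simp [Lmap, smul_eq_mul]

lemma dz_of_Lmap {g : ℂ → ℂ} {z α β : ℂ} (h : HasFDerivAt g (Lmap α β) z) :
    dz g z = α - Complex.I * β / 2 := by
  rw [dz, h.fderiv, Lmap_apply, Lmap_apply]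
  simp only [Complex.one_im, Complex.I_im, Complex.ofReal_zero, Complex.ofReal_one]
  field_simp
  linear_combination (-α) * Complex.I_mul_I

lemma hasFDerivAt_piece {m : ℤ} {h : ℂ → ℂ} {d : ℂ} {z : ℂ} (hz : z.im ≠ 0)
    (hh : HasDerivAt h d z) :
    HasFDerivAt (fun w => ((w.im : ℂ)) ^ m * h w)
      (Lmap (((z.im : ℂ)) ^ m * d) ((m : ℂ) * ((z.im : ℂ)) ^ (m - 1) * h z)) z := by
  have hz' : ((z.im : ℂ)) ≠ 0 := Complex.ofReal_ne_zero.mpr hz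
  have h1 : HasDerivAt (fun x : ℂ => x ^ m) ((m : ℂ) * ((z.im : ℂ)) ^ (m - 1)) ((z.im : ℂ)) :=
    hasDerivAt_zpow m _ (Or.inl hz')
  have h2 : HasDerivAt (fun t : ℝ => ((t : ℂ)) ^ m) ((m : ℂ) * ((z.im : ℂ)) ^ (m - 1)) z.im :=
    h1.comp_ofReal
  have h3 : HasFDerivAt (fun w : ℂ => ((w.im : ℂ)) ^ m)
      ((ContinuousLinearMap.smulRight (1 : ℝ →L[ℝ] ℝ)
        ((m : ℂ) * ((z.im : ℂ)) ^ (m - 1))).comp Complex.imCLM) z :=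
    (h2.hasFDerivAt).comp z Complex.imCLM.hasFDerivAt
  have h5 := h3.mul (hh.hasFDerivAt.restrictScalars ℝ)
  refine h5.congr_fderiv ?_
  apply ContinuousLinearMap.ext; intro v
  simp only [Lmap_apply, ContinuousLinearMap.add_apply, ContinuousLinearMap.coe_smul',
    Pi.smul_apply, ContinuousLinearMap.coe_comp', Function.comp_apply,
    ContinuousLinearMap.coe_restrictScalars', ContinuousLinearMap.smulRight_apply,
    ContinuousLinearMap.one_apply, Complex.imCLM_apply, Complex.real_smul, smul_eq_mul,
    ContinuousLinearMap.toSpanSingleton_apply]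
  ring


def cfa (k ℓ i : ℕ) : ℂ :=
  ((-(4 * (Real.pi : ℂ))) ^ i / (i.factorial : ℂ)) * ((ℓ + (k - 1)).choose (ℓ - i) : ℂ)

def Pfun (a : ℕ → ℂ) (k ℓ : ℕ) (z : ℂ) : ℂ :=
  (ℓ.factorial : ℂ) * ∑ i ∈ Finset.range (ℓ + 1),
    cfa k ℓ i * ((z.im : ℂ)) ^ ((i : ℤ) - ℓ) * Hfun a i z

lemma Pfun_hasFDerivAt {a : ℕ → ℂ} {C : ℝ} {k : ℕ} (ha : ∀ n : ℕ, ‖a n‖ ≤ C * (n : ℝ) ^ k)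
    (ℓ : ℕ) {z : ℂ} (hz : 0 < z.im) :
    HasFDerivAt (Pfun a k ℓ)
      (Lmap
        ((ℓ.factorial : ℂ) * ∑ i ∈ Finset.range (ℓ + 1),
          cfa k ℓ i * (((z.im : ℂ)) ^ ((i : ℤ) - ℓ) * (2 * Real.pi * Complex.I * Hfun a (i + 1) z)))
        ((ℓ.factorial : ℂ) * ∑ i ∈ Finset.range (ℓ + 1),
          cfa k ℓ i * ((((i : ℤ) - ℓ : ℤ) : ℂ) * ((z.im : ℂ)) ^ ((i : ℤ) - ℓ - 1) * Hfun a i z))) z := by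
  have hz' : z.im ≠ 0 := ne_of_gt hz
  have hpiece : ∀ i ∈ Finset.range (ℓ + 1),
      HasFDerivAt (fun w => cfa k ℓ i * (((w.im : ℂ)) ^ ((i : ℤ) - ℓ) * Hfun a i w))
        (cfa k ℓ i • (Lmap (((z.im : ℂ)) ^ ((i : ℤ) - ℓ) * (2 * Real.pi * Complex.I * Hfun a (i + 1) z))
          ((((i : ℤ) - ℓ : ℤ) : ℂ) * ((z.im : ℂ)) ^ ((i : ℤ) - ℓ - 1) * Hfun a i z))) z := by
    intro i _
    exact (hasFDerivAt_piece hz' (Hderiv ha i hz)).const_mul (cfa k ℓ i)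
  have hsum := HasFDerivAt.sum hpiece
  have h := hsum.const_mul ((ℓ.factorial : ℂ))
  have hfun : (fun w => (ℓ.factorial : ℂ) * ∑ i ∈ Finset.range (ℓ + 1),
      cfa k ℓ i * (((w.im : ℂ)) ^ ((i : ℤ) - ℓ) * Hfun a i w)) = Pfun a k ℓ := by
    funext w
    rw [Pfun]
    congr 1
    exact Finset.sum_congr rfl fun i _ => by ring
  simp only [Finset.sum_apply] at h
  rw [hfun] at h
  refine h.congr_fderiv (Eq.symm ?_)
  apply ContinuousLinearMap.ext; intro v
  simp only [Lmap_apply, ContinuousLinearMap.coe_smul', Pi.smul_apply,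
    ContinuousLinearMap.coe_sum', Finset.sum_apply, smul_eq_mul]
  rw [Finset.mul_sum, Finset.mul_sum, Finset.sum_mul, Finset.sum_mul, ← Finset.sum_add_distrib,
    Finset.mul_sum]
  exact Finset.sum_congr rfl fun i _ => by ring

lemma nat_key (s i t : ℕ) :
    (s + i + 2) * Nat.choose (s + i + t + 2) (s + 1)
      = (i + 1) * Nat.choose (s + i + t + 1) (s + 1)
        + (s + 2 * i + t + 3) * Nat.choose (s + i + t + 1) s := by
  have hp : Nat.choose (s + i + t + 2) (s + 1)
      = Nat.choose (s + i + t + 1) s + Nat.choose (s + i + t + 1) (s + 1) :=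
    Nat.choose_succ_succ (s + i + t + 1) s
  have h2 : Nat.choose (s + i + t + 1) (s + 1) * (s + 1)
      = Nat.choose (s + i + t + 1) s * (s + i + t + 1 - s) := Nat.choose_succ_right_eq _ _
  have h3 : s + i + t + 1 - s = i + t + 1 := by omega
  rw [h3] at h2
  rw [hp]
  zify at h2 ⊢
  linear_combination h2


lemma coef_id (k ℓ j : ℕ) (hk : 0 < k) (hj : j < ℓ + 2) :
    (if j = 0 then 0 else (ℓ.factorial : ℂ) * (-(4 * (Real.pi : ℂ))) * cfa k ℓ (j - 1))
      + (if j = ℓ + 1 then 0 else (ℓ.factorial : ℂ) * cfa k ℓ j * ((j : ℂ) + ℓ + k))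
    = ((ℓ + 1).factorial : ℂ) * cfa k (ℓ + 1) j := by
  obtain ⟨t, rfl⟩ : ∃ t, k = t + 1 := ⟨k - 1, by omega⟩
  rcases eq_or_ne j 0 with rfl | hj0
  · rw [if_pos rfl, if_neg (by omega : (0:ℕ) ≠ ℓ + 1), zero_add]
    have key : (ℓ + t + 1) * Nat.choose (ℓ + t) ℓ = Nat.choose (ℓ + t + 1) (ℓ + 1) * (ℓ + 1) :=
      Nat.add_one_mul_choose_eq (ℓ + t) ℓ
    have key' : ((ℓ:ℂ) + t + 1) * (Nat.choose (ℓ + t) ℓ : ℂ)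
        = (Nat.choose (ℓ + t + 1) (ℓ + 1) : ℂ) * ((ℓ:ℂ) + 1) := by exact_mod_cast key
    simp only [cfa, pow_zero, Nat.sub_zero, Nat.factorial_zero, Nat.cast_one,
      Nat.add_sub_cancel, one_div, Nat.cast_zero]
    rw [show ℓ + 1 + t = ℓ + t + 1 from by omega]
    rw [Nat.factorial_succ]
    push_cast
    have hf : ((ℓ.factorial : ℂ)) ≠ 0 := Nat.cast_ne_zero.mpr (Nat.factorial_ne_zero _)
    field_simp
    linear_combination key'
  rcases eq_or_ne j (ℓ + 1) with rfl | hjl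
  · rw [if_neg hj0, if_pos rfl, add_zero]
    simp only [cfa, Nat.add_sub_cancel, Nat.sub_self, Nat.choose_zero_right, Nat.cast_one,
      mul_one]
    have hf : ((ℓ.factorial : ℂ)) ≠ 0 := Nat.cast_ne_zero.mpr (Nat.factorial_ne_zero _)
    have hf1 : (((ℓ+1).factorial : ℂ)) ≠ 0 := Nat.cast_ne_zero.mpr (Nat.factorial_ne_zero _)
    rw [pow_succ]
    field_simp
  · obtain ⟨i, rfl⟩ : ∃ i, j = i + 1 := ⟨j - 1, by omega⟩
    obtain ⟨s, rfl⟩ : ∃ s, ℓ = s + i + 1 := ⟨ℓ - i - 1, by omega⟩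
    rw [if_neg hj0, if_neg hjl]
    simp only [cfa, Nat.add_sub_cancel]
    rw [show s + i + 1 + t = s + i + t + 1 from by omega,
      show s + i + 1 - (i + 1) = s from by omega,
      show s + i + 1 - i = s + 1 from by omega,
      show s + i + 1 + 1 + t = s + i + t + 2 from by omega,
      show s + i + 1 + 1 - (i + 1) = s + 1 from by omega]
    have key := nat_key s i t
    have key' : ((s:ℂ) + i + 2) * (Nat.choose (s + i + t + 2) (s + 1) : ℂ)
        = ((i:ℂ) + 1) * (Nat.choose (s + i + t + 1) (s + 1) : ℂ)
          + ((s:ℂ) + 2 * i + t + 3) * (Nat.choose (s + i + t + 1) s : ℂ) := by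
      exact_mod_cast key
    set A := (Nat.choose (s + i + t + 1) (s + 1) : ℂ)
    set B := (Nat.choose (s + i + t + 1) s : ℂ)
    set D := (Nat.choose (s + i + t + 2) (s + 1) : ℂ)
    set F := ((s + i + 1).factorial : ℂ) with hF
    set G := (i.factorial : ℂ) with hG
    have hGne : G ≠ 0 := Nat.cast_ne_zero.mpr (Nat.factorial_ne_zero _)
    have hine : ((i:ℂ) + 1) ≠ 0 := by
      have h0 : ((i + 1 : ℕ) : ℂ) ≠ 0 := Nat.cast_ne_zero.mpr (by omega)
      push_cast at h0
      exact h0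
    rw [Nat.factorial_succ (s + i + 1), Nat.factorial_succ i]
    push_cast
    rw [pow_succ]
    calc F * -(4 * (Real.pi:ℂ)) * ((-(4 * (Real.pi:ℂ))) ^ i / G * A)
          + F * ((-(4 * (Real.pi:ℂ))) ^ i * -(4 * (Real.pi:ℂ)) / (((i:ℂ) + 1) * G) * B)
            * (((i:ℂ) + 1) + ((s:ℂ) + (i:ℂ) + 1) + ((t:ℂ) + 1))
        = F * -(4 * (Real.pi:ℂ)) * (-(4 * (Real.pi:ℂ))) ^ i / (((i:ℂ) + 1) * G)
            * (((i:ℂ) + 1) * A + ((s:ℂ) + 2 * i + t + 3) * B) := by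
          field_simp
          ring
      _ = F * -(4 * (Real.pi:ℂ)) * (-(4 * (Real.pi:ℂ))) ^ i / (((i:ℂ) + 1) * G)
            * (((s:ℂ) + i + 2) * D) := by rw [← key']
      _ = ((s:ℂ) + (i:ℂ) + 1 + 1) * F
            * ((-(4 * (Real.pi:ℂ))) ^ i * -(4 * (Real.pi:ℂ)) / (((i:ℂ) + 1) * G) * D) := by
          field_simp
          ring


lemma alg1 (A B P κ y : ℂ) (hy : y ≠ 0) :
    2 * Complex.I * ((A - Complex.I * B / 2) + κ / (2 * Complex.I * y) * P)
      = 2 * Complex.I * A + B + κ * y⁻¹ * P := by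
  have hI : Complex.I ≠ 0 := Complex.I_ne_zero
  field_simp
  linear_combination (-(y * B)) * Complex.I_mul_I

lemma step2 {a : ℕ → ℂ} {C : ℝ} {k : ℕ} (ha : ∀ n : ℕ, ‖a n‖ ≤ C * (n : ℝ) ^ k)
    (hk : 0 < k) (ℓ : ℕ) {z : ℂ} (hz : 0 < z.im) :
    shimuraMaass ((k : ℂ) + 2 * ℓ) (Pfun a k ℓ) z = Pfun a k (ℓ + 1) z := by
  have hy : ((z.im : ℂ)) ≠ 0 := Complex.ofReal_ne_zero.mpr (ne_of_gt hz)
  have hII : Complex.I * Complex.I = -1 := Complex.I_mul_I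
  set Q : ℕ → ℂ := fun j => ((z.im : ℂ)) ^ ((j : ℤ) - (ℓ + 1)) * Hfun a j z with hQ
  set A : ℂ := (ℓ.factorial : ℂ) * ∑ i ∈ Finset.range (ℓ + 1),
      cfa k ℓ i * (((z.im : ℂ)) ^ ((i : ℤ) - ℓ) * (2 * Real.pi * Complex.I * Hfun a (i + 1) z)) with hA
  set B : ℂ := (ℓ.factorial : ℂ) * ∑ i ∈ Finset.range (ℓ + 1),
      cfa k ℓ i * ((((i : ℤ) - ℓ : ℤ) : ℂ) * ((z.im : ℂ)) ^ ((i : ℤ) - ℓ - 1) * Hfun a i z) with hB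
  have hdz : dz (Pfun a k ℓ) z = A - Complex.I * B / 2 := dz_of_Lmap (Pfun_hasFDerivAt ha ℓ hz)
  have h1 : shimuraMaass ((k : ℂ) + 2 * ℓ) (Pfun a k ℓ) z
      = 2 * Complex.I * A + B + ((k : ℂ) + 2 * ℓ) * ((z.im : ℂ))⁻¹ * Pfun a k ℓ z := by
    rw [show shimuraMaass ((k : ℂ) + 2 * ℓ) (Pfun a k ℓ) z
        = 2 * Complex.I * (dz (Pfun a k ℓ) z
          + ((k : ℂ) + 2 * ℓ) / (2 * Complex.I * (z.im : ℂ)) * Pfun a k ℓ z) from rfl, hdz]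
    exact alg1 A B (Pfun a k ℓ z) _ _ hy
  rw [h1]
  -- rewrite 2I*A as a shifted sum
  have h2 : 2 * Complex.I * A
      = ∑ j ∈ Finset.range (ℓ + 2),
          (if j = 0 then 0 else (ℓ.factorial : ℂ) * (-(4 * (Real.pi : ℂ))) * cfa k ℓ (j - 1)) * Q j := by
    rw [Finset.sum_range_succ' _ (ℓ + 1)]
    simp only [Nat.succ_ne_zero, if_false, Nat.add_sub_cancel, eq_self_iff_true, if_true,
      zero_mul, add_zero]
    rw [hA, Finset.mul_sum, Finset.mul_sum]
    apply Finset.sum_congr rfl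
    intro i _
    have hexp : ((i : ℤ) + 1) - ((ℓ : ℤ) + 1) = (i : ℤ) - ℓ := by ring
    rw [hQ]
    simp only []
    rw [show (((i+1 : ℕ)) : ℤ) - (((ℓ:ℤ)) + 1) = (i : ℤ) - ℓ from by push_cast; ring]
    linear_combination (4 * (Real.pi : ℂ) * (ℓ.factorial : ℂ) * cfa k ℓ i
      * ((z.im : ℂ)) ^ ((i : ℤ) - ℓ) * Hfun a (i + 1) z) * hII
  -- rewrite B + κ y⁻¹ P as a sum
  have h3 : B + ((k : ℂ) + 2 * ℓ) * ((z.im : ℂ))⁻¹ * Pfun a k ℓ z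
      = ∑ j ∈ Finset.range (ℓ + 2),
          (if j = ℓ + 1 then 0 else (ℓ.factorial : ℂ) * cfa k ℓ j * ((j : ℂ) + ℓ + k)) * Q j := by
    rw [Finset.sum_range_succ, if_pos rfl, zero_mul, add_zero]
    rw [hB, Pfun, Finset.mul_sum, Finset.mul_sum, Finset.mul_sum, ← Finset.sum_add_distrib]
    apply Finset.sum_congr rfl
    intro i hi
    have hi' : i ≠ ℓ + 1 := by
      have := Finset.mem_range.mp hi; omega
    rw [if_neg hi', hQ]
    simp only []
    have hzp : ((z.im : ℂ)) ^ ((i : ℤ) - (ℓ + 1)) = ((z.im : ℂ))⁻¹ * ((z.im : ℂ)) ^ ((i : ℤ) - ℓ) := by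
      rw [show (i : ℤ) - ((ℓ:ℤ) + 1) = ((i : ℤ) - ℓ) - 1 from by ring, zpow_sub_one₀ hy]
      ring
    have hzp2 : ((z.im : ℂ)) ^ ((i : ℤ) - (ℓ:ℤ) - 1) = ((z.im : ℂ))⁻¹ * ((z.im : ℂ)) ^ ((i : ℤ) - ℓ) := by
      rw [zpow_sub_one₀ hy]; ring
    rw [hzp, hzp2]
    push_cast
    ring
  rw [add_assoc, h2, h3, ← Finset.sum_add_distrib, Pfun, Finset.mul_sum]
  apply Finset.sum_congr rfl
  intro j hj
  rw [← add_mul, coef_id k ℓ j hk (Finset.mem_range.mp hj), hQ]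
  simp only []
  push_cast
  ring


lemma P_eq_RHS {a : ℕ → ℂ} {C : ℝ} {k : ℕ} (ha : ∀ n : ℕ, ‖a n‖ ≤ C * (n : ℝ) ^ k)
    (ℓ : ℕ) {z : ℂ} (hz : 0 < z.im) :
    ((z.im : ℂ)) ^ (-(ℓ : ℤ)) * (ℓ.factorial : ℂ) *
        ∑' n : ℕ, laguerre ℓ (k - 1) ((4 * Real.pi * ((n : ℝ) + 1) * z.im : ℝ) : ℂ) *
          a (n + 1) * qterm n z
      = Pfun a k ℓ z := by
  have hy : ((z.im : ℂ)) ≠ 0 := Complex.ofReal_ne_zero.mpr (ne_of_gt hz)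
  have hterm : ∀ n : ℕ,
      laguerre ℓ (k - 1) ((4 * Real.pi * ((n : ℝ) + 1) * z.im : ℝ) : ℂ) * a (n + 1) * qterm n z
        = ∑ i ∈ Finset.range (ℓ + 1),
            (cfa k ℓ i * ((z.im : ℂ)) ^ (i : ℕ)) * (((n : ℂ) + 1) ^ i * a (n + 1) * qterm n z) := by
    intro n
    rw [laguerre, Finset.sum_mul, Finset.sum_mul]
    apply Finset.sum_congr rfl
    intro i _
    rw [cfa]
    rw [show -(((4 * Real.pi * ((n : ℝ) + 1) * z.im : ℝ) : ℂ))
        = (-(4 * (Real.pi : ℂ))) * (((n : ℂ) + 1) * (z.im : ℂ)) from by push_cast; ring,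
      mul_pow, mul_pow]
    ring
  rw [tsum_congr hterm, Summable.tsum_finsetSum (fun i _ => ((Hsummable ha i hz).mul_left _)),
    Pfun, Finset.mul_sum, Finset.mul_sum]
  apply Finset.sum_congr rfl
  intro i _
  rw [tsum_mul_left]
  have hzp : ((z.im : ℂ)) ^ (-(ℓ : ℤ)) * ((z.im : ℂ)) ^ (i : ℕ) = ((z.im : ℂ)) ^ ((i : ℤ) - ℓ) := by
    rw [← zpow_natCast ((z.im : ℂ)) i, ← zpow_add₀ hy]
    congr 1
    ring
  rw [show ∑' n : ℕ, ((n : ℂ) + 1) ^ i * a (n + 1) * qterm n z = Hfun a i z from rfl, ← hzp]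
  ring

end SMproof
end


/-- Let `f(z) = Σ_{n ≥ 1} a_n e^{2πinz}` be a holomorphic cusp form of weight `k`
(formalized: `f` is holomorphic on the upper half-plane with the given Fourier
expansion with coefficients of polynomial growth).  Then for every `ℓ ≥ 0`,
`δ^ℓ f(z) = y^{-ℓ} ℓ! Σ_{n ≥ 1} L_ℓ^{(k-1)}(4πny) a_n e^{2πinz}`. -/
theorem iterated_shimura_maass_fourier (k : ℕ) (hk : 0 < k) (hke : Even k)
    (a : ℕ → ℂ) (C : ℝ) (ha : ∀ n : ℕ, ‖a n‖ ≤ C * (n : ℝ) ^ k) (f : ℂ → ℂ)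
    (hol : ∀ z : ℂ, 0 < z.im → DifferentiableAt ℂ f z)
    (hf : ∀ z : ℂ, 0 < z.im →
      f z = ∑' n : ℕ, a (n + 1) * Complex.exp (2 * Real.pi * Complex.I * ((n : ℂ) + 1) * z)) :
    ∀ ℓ : ℕ, ∀ z : ℂ, 0 < z.im →
      iterSM k ℓ f z
        = ((z.im : ℂ)) ^ (-(ℓ : ℤ)) * (ℓ.factorial : ℂ) *
            ∑' n : ℕ, laguerre ℓ (k - 1) ((4 * Real.pi * ((n : ℝ) + 1) * z.im : ℝ) : ℂ) *
              a (n + 1) * Complex.exp (2 * Real.pi * Complex.I * ((n : ℂ) + 1) * z) := by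
  intro ℓ z hz
  have key : ∀ (m : ℕ) (w : ℂ), 0 < w.im → iterSM k m f w = SMproof.Pfun a k m w := by
    intro m
    induction m with
    | zero =>
      intro w hw
      have h0 : iterSM k 0 f w = f w := rfl
      rw [h0, hf w hw, SMproof.Pfun]
      simp [SMproof.cfa, SMproof.Hfun, SMproof.qterm]
    | succ m ih =>
      intro w hw
      have hU : IsOpen {p : ℂ | 0 < p.im} := isOpen_lt continuous_const Complex.continuous_im
      have heq : iterSM k m f =ᶠ[nhds w] SMproof.Pfun a k m := by
        filter_upwards [hU.mem_nhds hw] with p hp using ih p hp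
      have hstep : iterSM k (m + 1) f w = shimuraMaass ((k : ℂ) + 2 * m) (iterSM k m f) w := rfl
      rw [hstep]
      have hcong : shimuraMaass ((k : ℂ) + 2 * m) (iterSM k m f) w
          = shimuraMaass ((k : ℂ) + 2 * m) (SMproof.Pfun a k m) w := by
        have e1 : fderiv ℝ (iterSM k m f) w = fderiv ℝ (SMproof.Pfun a k m) w := heq.fderiv_eq
        have e2 : iterSM k m f w = SMproof.Pfun a k m w := ih w hw
        simp only [shimuraMaass, dz, e1, e2]
      rw [hcong, SMproof.step2 ha hk m hw]
  rw [key ℓ z hz]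
  exact (SMproof.P_eq_RHS ha ℓ hz).symm
end
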